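/- The elliptic curve given by r^2 = q(q^2 - q + 1) has only the rational points (q, r) = (0, 0), (1, 1), and (1, -1) (together with the point at infinity). -/

import Mathlib

open Polynomial

private lemma isUnit2 : ¬ IsUnit (2:ℤ) := by decide
private lemma isUnit3 : ¬ IsUnit (3:ℤ) := by decide

private lemma sq_eq_of_nonneg {p q : ℤ} (hp : 0 ≤ p) (hq : 0 ≤ q) (h : p^2 = q^2) : p = q := by
  nlinarith [sq_nonneg (p - q), sq_nonneg (p + q)]

/-- coprime positive factors of a fourth power are fourth powers -/
private lemma pow4_of_coprime {a b c : ℤ} (h : IsCoprime a b) (ha : 0 < a) (hb : 0 < b)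
    (hc : 0 ≤ c) (heq : a * b = c ^ 4) :
    ∃ p q : ℤ, 0 < p ∧ 0 < q ∧ a = p ^ 4 ∧ b = q ^ 4 ∧ p * q = c := by
  obtain ⟨p0, hp0⟩ := Int.sq_of_isCoprime h (show a * b = (c^2)^2 by linear_combination heq)
  have hp : a = |p0| ^ 2 := by
    rcases hp0 with h' | h' <;> linarith [sq_abs p0, sq_nonneg p0]
  obtain ⟨q0, hq0⟩ := Int.sq_of_isCoprime h.symm (show b * a = (c^2)^2 by linear_combination heq)
  have hq : b = |q0| ^ 2 := by
    rcases hq0 with h' | h' <;> linarith [sq_abs q0, sq_nonneg q0]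
  set P := |p0| with hP
  set Q := |q0| with hQ
  have hPp : 0 < P := by nlinarith [abs_nonneg p0, hp]
  have hQp : 0 < Q := by nlinarith [abs_nonneg q0, hq]
  have hPQ : IsCoprime P Q := by
    rw [hp, hq] at h
    exact (h.of_isCoprime_of_dvd_left (dvd_pow_self P two_ne_zero)).of_isCoprime_of_dvd_right
      (dvd_pow_self Q two_ne_zero)
  have hPQc : P * Q = c ^ 2 := by
    apply sq_eq_of_nonneg (by positivity) (by positivity)
    have : (P * Q)^2 = (c^2)^2 := by rw [mul_pow, ← hp, ← hq, heq]; ring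
    nlinarith [this]
  obtain ⟨s0, hs0⟩ := Int.sq_of_isCoprime hPQ hPQc
  have hs : P = |s0| ^ 2 := by
    rcases hs0 with h' | h' <;> linarith [sq_abs s0, sq_nonneg s0]
  obtain ⟨t0, ht0⟩ := Int.sq_of_isCoprime hPQ.symm (by rw [mul_comm]; exact hPQc)
  have ht : Q = |t0| ^ 2 := by
    rcases ht0 with h' | h' <;> linarith [sq_abs t0, sq_nonneg t0]
  refine ⟨|s0|, |t0|, by nlinarith [abs_nonneg s0, hs], by nlinarith [abs_nonneg t0, ht], by rw [hp, hs]; ring, by rw [hq, ht]; ring, ?_⟩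
  apply sq_eq_of_nonneg (by positivity) hc
  rw [mul_pow, ← hs, ← ht, hPQc]

private lemma coprime_abs {x y : ℤ} (h : IsCoprime x y) : IsCoprime |x| |y| := by
  rcases abs_choice x with h1 | h1 <;> rcases abs_choice y with h2 | h2 <;>
    rw [h1, h2] <;> [exact h; exact h.neg_right; exact h.neg_left; exact h.neg_left.neg_right]

private lemma zmod3_aux : ∀ u v : ZMod 3, u^4 - u^2*v^2 + v^4 = 0 → u = 0 ∧ v = 0 := by decide

private lemma zmod4_aux1 : ∀ A B X : ZMod 4,
    (2*X+1)^2 ≠ 3*(2*B+1)^4 + 2*(A+A)^2*(2*B+1)^2 - (A+A)^4 := by decide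

private lemma zmod4_aux2 : ∀ A B X : ZMod 4,
    (2*X+1)^2 ≠ 3*(B+B)^4 + 2*(2*A+1)^2*(B+B)^2 - (2*A+1)^4 := by decide

private lemma opp (N : ℕ)
    (IH : ∀ M, M < N → ∀ x y z : ℤ, z.natAbs = M → 0 ≤ x → 0 ≤ y → 0 ≤ z →
      IsCoprime x y → x^4 - x^2*y^2 + y^4 = z^2 → x*y = 0 ∨ x^2 = y^2)
    (x y z : ℤ) (hN : z.natAbs = N) (hx : 0 < x) (hy : 0 < y) (hz : 0 < z)
    (hxodd : Odd x) (hyeven : Even y) (hco : IsCoprime x y)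
    (heq : x^4 - x^2*y^2 + y^4 = z^2) : False := by
  -- z is odd
  have hzodd : Odd z := by
    have hy2 : Even (y^2) := by rw [sq]; exact hyeven.mul_right y
    have hy4 : Even (y^4) := by rw [show (4:ℕ) = 2+2 from rfl, pow_add]; exact hy2.mul_right _
    have h2 : Odd (z^2) := by
      rw [← heq]
      exact ((hxodd.pow).sub_even (hy2.mul_left _)).add_even hy4
    rcases Int.even_or_odd z with he | ho
    · exact absurd h2 (by simpa using (Int.not_odd_iff_even.mpr (by rw [sq]; exact he.mul_right z)))
    · exact ho
  -- 3 does not divide z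
  have h3z : ¬ (3:ℤ) ∣ z := by
    intro h3
    have hcast : ((x:ZMod 3))^4 - (x:ZMod 3)^2*(y:ZMod 3)^2 + (y:ZMod 3)^4 = 0 := by
      have := congrArg (fun t : ℤ => (t : ZMod 3)) heq
      push_cast at this
      rw [this, show ((z:ℤ) : ZMod 3) = 0 from (ZMod.intCast_zmod_eq_zero_iff_dvd z 3).mpr h3]
      ring
    obtain ⟨hx3, hy3⟩ := zmod3_aux _ _ hcast
    have dx : (3:ℤ) ∣ x := (ZMod.intCast_zmod_eq_zero_iff_dvd x 3).mp hx3
    have dy : (3:ℤ) ∣ y := (ZMod.intCast_zmod_eq_zero_iff_dvd y 3).mp hy3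
    exact isUnit3 (hco.isUnit_of_dvd' dx dy)
  obtain ⟨w, hw⟩ := hyeven
  have hwpos : 0 < w := by linarith only [hy, hw]
  obtain ⟨k, hk⟩ := hzodd.sub_odd (hxodd.pow (n := 2))
  obtain ⟨l, hl⟩ := hzodd.add_odd (hxodd.pow (n := 2))
  set u : ℤ := k + w^2 with hu
  set v : ℤ := l - w^2 with hv
  have h2u : 2*u = z - x^2 + 2*w^2 := by rw [hu]; linarith only [hk]
  have h2v : 2*v = z + x^2 - 2*w^2 := by rw [hv]; linarith only [hl]
  have huv : u * v = 3*w^4 := by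
    have h4 : 4*(u*v) = 12*w^4 := by
      linear_combination (2*v)*h2u + (z - x^2 + 2*w^2)*h2v - heq +
        ((y+2*w)*(y^2+4*w^2-x^2))*hw
    linarith only [h4]
  have hsum : u + v = z := by linarith only [h2u, h2v]
  have hdiff : v - u = x^2 - 2*w^2 := by linarith only [h2u, h2v]
  have hupos : 0 < u := by
    rcases lt_trichotomy u 0 with hcase | hcase | hcase
    · have hv0 : 0 < v := by linarith only [hcase, hsum, hz]
      nlinarith only [mul_pos (neg_pos.mpr hcase) hv0, pow_pos hwpos 4, huv]
    · have h0 : u * v = 0 := by rw [hcase]; ring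
      linarith only [h0, huv, pow_pos hwpos 4]
    · exact hcase
  have hvpos : 0 < v := by
    by_contra hvn
    push_neg at hvn
    nlinarith only [mul_nonneg hupos.le (neg_nonneg.mpr hvn), huv, pow_pos hwpos 4]
  -- u and v are coprime
  have hcop_uv : IsCoprime u v := by
    rw [Int.isCoprime_iff_gcd_eq_one]
    by_contra hg
    obtain ⟨p, hp, hpdvd⟩ := Nat.exists_prime_and_dvd hg
    have hpu : (p:ℤ) ∣ u := dvd_trans (Int.natCast_dvd_natCast.mpr hpdvd) (Int.gcd_dvd_left _ _)
    have hpv : (p:ℤ) ∣ v := dvd_trans (Int.natCast_dvd_natCast.mpr hpdvd) (Int.gcd_dvd_right _ _)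
    have hpP : Prime (p:ℤ) := Nat.prime_iff_prime_int.mp hp
    have hpw : (p:ℤ) ∣ 3*w^4 := huv ▸ hpu.mul_right v
    rcases hpP.dvd_mul.mp hpw with h3 | hw4
    · have : (p:ℕ) ∣ 3 := by exact_mod_cast h3
      have hp3 : p = 3 := (Nat.prime_dvd_prime_iff_eq hp (by norm_num)).mp this
      apply h3z
      rw [← hsum]
      exact_mod_cast (hp3 ▸ dvd_add hpu hpv)
    · have hpwdvd : (p:ℤ) ∣ w := hpP.dvd_of_dvd_pow hw4
      have hpy : (p:ℤ) ∣ y := by rw [hw]; exact dvd_add hpwdvd hpwdvd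
      have hpx : (p:ℤ) ∣ x := by
        have hpx2 : (p:ℤ) ∣ x^2 := by
          have hxx : x^2 = (v - u) + 2*w^2 := by linarith only [hdiff]
          rw [hxx]
          exact dvd_add (dvd_sub hpv hpu) (Dvd.dvd.mul_left (hpwdvd.pow two_ne_zero) 2)
        exact hpP.dvd_of_dvd_pow hpx2
      exact hpP.not_unit (hco.isUnit_of_dvd' hpx hpy)
  -- 3 divides u*v
  have h3uv : (3:ℤ) ∣ u * v := ⟨w^4, huv⟩
  rcases (Int.prime_three.dvd_mul.mp h3uv) with h3u | h3v
  · -- descent case : 3 ∣ u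
    obtain ⟨u1, hu1⟩ := h3u
    have hu1v : u1 * v = w^4 := by
      have h3 : (3:ℤ) * (u1 * v) = 3 * w^4 := by rw [← huv, hu1]; ring
      exact mul_left_cancel₀ (by norm_num) h3
    have hu1pos : 0 < u1 := by linarith only [hu1, hupos]
    have hcop1 : IsCoprime u1 v :=
      hcop_uv.of_isCoprime_of_dvd_left ⟨3, by linarith only [hu1]⟩
    obtain ⟨a, b, hapos, hbpos, ha4, hb4, hab⟩ :=
      pow4_of_coprime hcop1 hu1pos hvpos hwpos.le hu1v
    have hcop_ab : IsCoprime a b := by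
      rw [ha4, hb4] at hcop1
      exact (hcop1.of_isCoprime_of_dvd_left (dvd_pow_self a four_ne_zero)).of_isCoprime_of_dvd_right
        (dvd_pow_self b four_ne_zero)
    have hkey : x^2 + (2*a^2)^2 = (a^2+b^2)^2 := by
      linear_combination -hdiff + hb4 - hu1 - 3*ha4 - 2*(a*b+w)*hab
    have htriple : PythagoreanTriple x (2*a^2) (a^2+b^2) := by
      show x*x + (2*a^2)*(2*a^2) = (a^2+b^2)*(a^2+b^2)
      linear_combination hkey
    have hgcd : Int.gcd x (2*a^2) = 1 := by
      rw [← Int.isCoprime_iff_gcd_eq_one]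
      by_contra hg
      rw [Int.isCoprime_iff_gcd_eq_one] at hg
      obtain ⟨p, hp, hpdvd⟩ := Nat.exists_prime_and_dvd hg
      have hpx : (p:ℤ) ∣ x := dvd_trans (Int.natCast_dvd_natCast.mpr hpdvd) (Int.gcd_dvd_left _ _)
      have hpa2 : (p:ℤ) ∣ 2*a^2 := dvd_trans (Int.natCast_dvd_natCast.mpr hpdvd) (Int.gcd_dvd_right _ _)
      have hpP : Prime (p:ℤ) := Nat.prime_iff_prime_int.mp hp
      rcases hpP.dvd_mul.mp hpa2 with h2 | ha2
      · have hp2 : (p:ℤ) = 2 := by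
          have hd2 : (p:ℕ) ∣ 2 := by exact_mod_cast h2
          exact_mod_cast (Nat.prime_dvd_prime_iff_eq hp (by norm_num)).mp hd2
        rw [hp2] at hpx
        exact (Int.not_odd_iff_even.mpr ⟨x/2, by omega⟩) hxodd
      · have hpa : (p:ℤ) ∣ a := hpP.dvd_of_dvd_pow ha2
        have hpy : (p:ℤ) ∣ y := by
          rw [hw, ← hab]
          exact dvd_add (hpa.mul_right b) (hpa.mul_right b)
        exact hpP.not_unit (hco.isUnit_of_dvd' hpx hpy)
    obtain ⟨m, n, hxm, ha2mn, hhyp, hmn_gcd, _, hm0⟩ :=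
      htriple.coprime_classification' hgcd (Int.odd_iff.mp hxodd) (by positivity)
    have hmn : m * n = a^2 := by linarith only [ha2mn]
    have hmpos : 0 < m := by
      rcases hm0.eq_or_lt with h0 | h0
      · exfalso
        have ha2 : a^2 = 0 := by rw [← hmn, ← h0]; ring
        have hz0 := (pow_eq_zero_iff two_ne_zero).mp ha2
        exact absurd hz0 (ne_of_gt hapos)
      · exact h0
    have hnpos : 0 < n := by
      by_contra hn
      push_neg at hn
      nlinarith only [mul_nonneg hmpos.le (neg_nonneg.mpr hn), hmn, pow_pos hapos 2]
    have hcop_mn : IsCoprime m n := Int.isCoprime_iff_gcd_eq_one.mpr hmn_gcd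
    obtain ⟨e0, he0⟩ := Int.sq_of_isCoprime hcop_mn hmn
    have hme : m = |e0|^2 := by
      rcases he0 with h' | h' <;> linarith only [sq_abs e0, sq_nonneg e0, h', hmpos]
    obtain ⟨f0, hf0⟩ := Int.sq_of_isCoprime hcop_mn.symm (by rw [mul_comm]; exact hmn)
    have hnf : n = |f0|^2 := by
      rcases hf0 with h' | h' <;> linarith only [sq_abs f0, sq_nonneg f0, h', hnpos]
    set e := |e0| with he
    set f := |f0| with hf
    have hcop_ef : IsCoprime e f := by
      rw [hme, hnf] at hcop_mn
      exact (hcop_mn.of_isCoprime_of_dvd_left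
        (dvd_pow_self e two_ne_zero)).of_isCoprime_of_dvd_right (dvd_pow_self f two_ne_zero)
    have hbeq : e^4 - e^2*f^2 + f^4 = b^2 := by
      have hh : a^2 + b^2 = m^2 + n^2 := hhyp
      rw [hme, hnf] at hh hmn
      linarith only [hh, hmn]
    have hzval : z = 3*a^4 + b^4 := by linear_combination -hsum + hu1 + 3*ha4 + hb4
    have hbz : b < z := by
      have hb4' : b ≤ b^4 := le_self_pow₀ (by linarith only [hbpos]) (by norm_num)
      have ha4' := pow_pos hapos 4
      linarith only [hb4', ha4', hzval]
    have hblt : b.natAbs < N := by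
      rw [← hN]
      exact Int.natAbs_lt_natAbs_of_nonneg_of_lt hbpos.le hbz
    rcases IH b.natAbs hblt e f b rfl (abs_nonneg e0) (abs_nonneg f0) hbpos.le hcop_ef hbeq
      with hef | hef
    · rcases mul_eq_zero.mp hef with h0 | h0
      · rw [h0] at hme
        simp at hme
        exact absurd hme (ne_of_gt hmpos)
      · rw [h0] at hnf
        simp at hnf
        exact absurd hnf (ne_of_gt hnpos)
    · have hmn_eq : m = n := by rw [hme, hnf, hef]
      have hx0 : x = 0 := by rw [hxm, hmn_eq]; ring
      exact absurd hx0 (ne_of_gt hx)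
  · -- contradiction case : 3 ∣ v
    obtain ⟨v1, hv1⟩ := h3v
    have huv1 : u * v1 = w^4 := by
      have h3 : (3:ℤ) * (u * v1) = 3 * w^4 := by rw [← huv, hv1]; ring
      exact mul_left_cancel₀ (by norm_num) h3
    have hv1pos : 0 < v1 := by linarith only [hv1, hvpos]
    have hcop1 : IsCoprime u v1 :=
      hcop_uv.of_isCoprime_of_dvd_right ⟨3, by linarith only [hv1]⟩
    obtain ⟨a, b, hapos, hbpos, ha4, hb4, hab⟩ :=
      pow4_of_coprime hcop1 hupos hv1pos hwpos.le huv1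
    have hcop_ab : IsCoprime a b := by
      rw [ha4, hb4] at hcop1
      exact (hcop1.of_isCoprime_of_dvd_left (dvd_pow_self a four_ne_zero)).of_isCoprime_of_dvd_right
        (dvd_pow_self b four_ne_zero)
    have hx2 : x^2 = 3*b^4 + 2*a^2*b^2 - a^4 := by
      linear_combination -hdiff + hv1 - ha4 + 3*hb4 - 2*(a*b+w)*hab
    have hzval : z = a^4 + 3*b^4 := by linear_combination -hsum + hv1 + ha4 + 3*hb4
    rcases Int.even_or_odd a with hae | hao
    · rcases Int.even_or_odd b with hbe | hbo
      · obtain ⟨a0, ha0⟩ := hae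
        obtain ⟨b0, hb0⟩ := hbe
        exact isUnit2 (hcop_ab.isUnit_of_dvd' ⟨a0, by linarith only [ha0]⟩
          ⟨b0, by linarith only [hb0]⟩)
      · obtain ⟨a0, ha0⟩ := hae
        obtain ⟨b0, hb0⟩ := hbo
        obtain ⟨x0, hx0⟩ := hxodd
        rw [ha0, hb0, hx0] at hx2
        have hcast := congrArg (fun t : ℤ => (t : ZMod 4)) hx2
        push_cast at hcast
        exact zmod4_aux1 (a0 : ZMod 4) (b0 : ZMod 4) (x0 : ZMod 4) (by linear_combination hcast)
    · rcases Int.even_or_odd b with hbe | hbo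
      · obtain ⟨a0, ha0⟩ := hao
        obtain ⟨b0, hb0⟩ := hbe
        obtain ⟨x0, hx0⟩ := hxodd
        rw [ha0, hb0, hx0] at hx2
        have hcast := congrArg (fun t : ℤ => (t : ZMod 4)) hx2
        push_cast at hcast
        exact zmod4_aux2 (a0 : ZMod 4) (b0 : ZMod 4) (x0 : ZMod 4) (by linear_combination hcast)
      · have hev : Even z := by
          rw [hzval]
          exact (hao.pow).add_odd (Odd.mul (⟨1, by norm_num⟩ : Odd (3:ℤ)) (hbo.pow))
        exact (Int.not_odd_iff_even.mpr hev) hzodd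

private lemma sq_pos_of_ne {m : ℤ} (h : m ≠ 0) : 0 < m^2 := by
  rcases h.lt_or_gt with h' | h' <;> nlinarith only [h']

private lemma descent : ∀ N : ℕ, ∀ x y z : ℤ, z.natAbs = N → 0 ≤ x → 0 ≤ y → 0 ≤ z →
    IsCoprime x y → x^4 - x^2*y^2 + y^4 = z^2 → x*y = 0 ∨ x^2 = y^2 := by
  intro N
  induction N using Nat.strong_induction_on with
  | _ N IH =>
  intro x y z hN hx0 hy0 hz0 hco heq
  rcases hx0.eq_or_lt with hx | hx
  · left; rw [← hx, zero_mul]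
  rcases hy0.eq_or_lt with hy | hy
  · left; rw [← hy, mul_zero]
  by_cases hxy : x^2 = y^2
  · right; exact hxy
  have hzpos : 0 < z := by
    rcases hz0.eq_or_lt with h0 | h0
    · exfalso
      have hP : 0 < x*y := mul_pos hx hy
      nlinarith only [heq, hP, sq_nonneg (x^2 - y^2), h0, mul_pos hP hP]
    · exact h0
  rcases Int.even_or_odd x with hxe | hxo
  · rcases Int.even_or_odd y with hye | hyo
    · obtain ⟨a0, ha0⟩ := hxe
      obtain ⟨b0, hb0⟩ := hye
      exact absurd (hco.isUnit_of_dvd' ⟨a0, by linarith only [ha0]⟩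
        ⟨b0, by linarith only [hb0]⟩) isUnit2
    · exact (opp N IH y x z hN hy hx hzpos hyo hxe hco.symm (by linear_combination heq)).elim
  · rcases Int.even_or_odd y with hye | hyo
    · exact (opp N IH x y z hN hx hy hzpos hxo hye hco heq).elim
    · -- both odd
      have hApos : 0 < x*y := mul_pos hx hy
      have hAodd : (x*y) % 2 = 1 := Int.odd_iff.mp (hxo.mul hyo)
      have htriple : PythagoreanTriple (x*y) (x^2-y^2) z := by
        show (x*y)*(x*y) + (x^2-y^2)*(x^2-y^2) = z*z
        linear_combination heq
      have h1 : IsCoprime x (x^2-y^2) := by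
        have h' : IsCoprime x (-(y^2) + x*x) := ((hco.pow_right).neg_right).add_mul_left_right x
        have hr : x^2 - y^2 = -(y^2) + x*x := by ring
        rw [hr]; exact h'
      have h2 : IsCoprime y (x^2-y^2) := by
        have h' : IsCoprime y (x^2 + y*(-y)) := (hco.symm.pow_right).add_mul_left_right (-y)
        have hr : x^2 - y^2 = x^2 + y*(-y) := by ring
        rw [hr]; exact h'
      have hAB : IsCoprime (x*y) (x^2-y^2) := h1.mul_left h2
      obtain ⟨m, n, hA, hB, hZ, hmn_gcd, _, hm0⟩ :=
        htriple.coprime_classification' (Int.isCoprime_iff_gcd_eq_one.mp hAB) hAodd hzpos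
      have hm_ne : m ≠ 0 := by
        intro h0
        rw [h0] at hA
        nlinarith only [hApos, hA, sq_nonneg n]
      have hn_ne : n ≠ 0 := by
        intro h0
        rw [h0] at hB
        apply hxy
        linarith only [hB]
      obtain ⟨c, hc⟩ := (hxo.pow (n := 2)).add_odd (hyo.pow (n := 2))
      have h4c : 4*c^2 = 4*(m^4 - m^2*n^2 + n^4) := by
        linear_combination (-(x^2+y^2+2*c))*hc + heq + 3*(x*y+m^2-n^2)*hA + (z+m^2+n^2)*hZ
      have hcsq : c^2 = m^4 - m^2*n^2 + n^4 := by linarith only [h4c]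
      have hcpos : 0 < c := by nlinarith only [hc, sq_pos_of_ne (ne_of_gt hx), sq_pos_of_ne (ne_of_gt hy)]
      have hm2 := sq_pos_of_ne hm_ne
      have hn2 := sq_pos_of_ne hn_ne
      have hz2 : z^2 = (m^2+n^2)^2 := by rw [hZ]
      have hdiffsq : z^2 - c^2 = 3*(m^2*n^2) := by linear_combination hz2 - hcsq
      have hcz : c < z := by nlinarith only [hdiffsq, hm2, hn2, hcpos, hzpos, mul_pos hm2 hn2]
      have hclt : c.natAbs < N := by
        rw [← hN]
        exact Int.natAbs_lt_natAbs_of_nonneg_of_lt hcpos.le hcz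
      have habs4 : |n|^4 = n^4 := by
        rw [show (4:ℕ) = 2*2 from rfl, pow_mul, pow_mul, sq_abs]
      have hcop_mn : IsCoprime m n := Int.isCoprime_iff_gcd_eq_one.mpr hmn_gcd
      have hcop' : IsCoprime m |n| := by
        rcases abs_choice n with h' | h' <;> rw [h']
        · exact hcop_mn
        · exact hcop_mn.neg_right
      have heq' : m^4 - m^2*|n|^2 + |n|^4 = c^2 := by
        rw [sq_abs, habs4]
        linarith only [hcsq]
      rcases IH c.natAbs hclt m |n| c rfl hm0 (abs_nonneg n) hcpos.le hcop' heq' with hr | hr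
      · rcases mul_eq_zero.mp hr with h0 | h0
        · exact absurd h0 hm_ne
        · exact absurd (abs_eq_zero.mp h0) hn_ne
      · exfalso
        rw [sq_abs] at hr
        have : x*y = 0 := by rw [hA, hr, sub_self]
        exact absurd this (ne_of_gt hApos)

private lemma quartic {x y z : ℤ} (hco : IsCoprime x y)
    (heq : x^4 - x^2*y^2 + y^4 = z^2) : x*y = 0 ∨ x^2 = y^2 := by
  have h4 : ∀ t : ℤ, |t|^4 = t^4 := fun t => by
    rw [show (4:ℕ) = 2*2 from rfl, pow_mul, pow_mul, sq_abs]
  have heq' : |x|^4 - |x|^2*|y|^2 + |y|^4 = |z|^2 := by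
    rw [h4, h4, sq_abs, sq_abs, sq_abs]
    exact heq
  rcases descent (|z|.natAbs) |x| |y| |z| rfl (abs_nonneg x) (abs_nonneg y) (abs_nonneg z)
    (coprime_abs hco) heq' with hr | hr
  · left
    rw [← abs_mul] at hr
    exact abs_eq_zero.mp hr
  · right
    rw [sq_abs, sq_abs] at hr
    exact hr

theorem stmt_4 (q r : ℚ) (h : r^2 = q * (q^2 - q + 1)) :
    (q, r) = (0, 0) ∨ (q, r) = (1, 1) ∨ (q, r) = (1, -1) := by
  set n : ℤ := q.num with hn
  set d : ℤ := (q.den : ℤ) with hd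
  have hd0 : 0 < d := by rw [hd]; exact_mod_cast q.pos
  have hdQ : (d:ℚ) ≠ 0 := by exact_mod_cast hd0.ne'
  have heQ : ((r.den:ℤ):ℚ) ≠ 0 := by exact_mod_cast r.pos.ne'
  have hcnd : IsCoprime n d := by
    rw [Int.isCoprime_iff_nat_coprime, hn, hd]
    simpa using q.reduced
  have hcre : IsCoprime r.num ((r.den:ℤ)) := by
    rw [Int.isCoprime_iff_nat_coprime]
    simpa using r.reduced
  have e2 : (q:ℚ) = (n:ℚ)/(d:ℚ) := by rw [hn, hd]; push_cast; rw [Rat.num_div_den]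
  have e1 : (r:ℚ) = (r.num:ℚ)/((r.den:ℤ):ℚ) := by push_cast; rw [Rat.num_div_den]
  have hint : r.num^2 * d^3 = (n^3 - n^2*d + n*d^2) * (r.den:ℤ)^2 := by
    have h' := h
    rw [e1, e2] at h'
    field_simp at h'
    have h3 : ((r.num ^ 2 * d^4 : ℤ) : ℚ) = (((n^3 - n^2*d + n*d^2) * (r.den:ℤ)^2 * d : ℤ) : ℚ) := by
      push_cast
      linear_combination (d:ℚ) * h'
    have h4 : r.num ^ 2 * d^4 = (n^3 - n^2*d + n*d^2) * (r.den:ℤ)^2 * d := by exact_mod_cast h3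
    have h5 : d * (r.num^2 * d^3) = d * ((n^3 - n^2*d + n*d^2) * (r.den:ℤ)^2) := by
      linear_combination h4
    exact mul_left_cancel₀ (ne_of_gt hd0) h5
  -- d^3 = r.den^2
  set e : ℤ := (r.den:ℤ) with he
  have he0 : 0 < e := by rw [he]; exact_mod_cast r.pos
  have hcopf : IsCoprime (n^2 - n*d + d^2) d := by
    have h' : IsCoprime d (n^2 + d*(d - n)) := (hcnd.symm.pow_right).add_mul_left_right (d - n)
    have hr' : n^2 - n*d + d^2 = n^2 + d*(d - n) := by ring
    rw [hr']
    exact h'.symm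
  have hcopNd : IsCoprime (n*(n^2 - n*d + d^2)) d := hcnd.mul_left hcopf
  have heq2 : r.num^2 * d^3 = (n*(n^2 - n*d + d^2)) * e^2 := by
    linear_combination hint
  have d3_dvd : d^3 ∣ e^2 := by
    refine (IsCoprime.pow_left hcopNd.symm).dvd_of_dvd_mul_left (z := e^2) ?_
    exact ⟨r.num^2, by linear_combination -heq2⟩
  have e2_dvd : e^2 ∣ d^3 := by
    refine (IsCoprime.pow (m := 2) (n := 2) hcre.symm).dvd_of_dvd_mul_left (y := r.num^2) (z := d^3) ?_
    exact ⟨n*(n^2 - n*d + d^2), by linear_combination heq2⟩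
  have d3e2 : d^3 = e^2 := Int.dvd_antisymm (by positivity) (by positivity) d3_dvd e2_dvd
  have hNum : r.num^2 = n*(n^2 - n*d + d^2) := by
    have hcancel : r.num^2 * d^3 = (n*(n^2 - n*d + d^2)) * d^3 := by
      rw [heq2, d3e2]
    exact mul_right_cancel₀ (by positivity) hcancel
  -- d is a perfect square
  have hdvd_de : d ∣ e := by
    rw [← Int.pow_dvd_pow_iff (two_ne_zero)]
    exact ⟨d, by linear_combination -d3e2⟩
  obtain ⟨kk, hkk⟩ := hdvd_de
  have hdkk : d = kk^2 := by
    have : d^2 * d = d^2 * kk^2 := by rw [hkk] at d3e2; linear_combination d3e2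
    exact mul_left_cancel₀ (by positivity) this
  have hNpos : 0 < n^2 - n*d + d^2 := by nlinarith only [sq_nonneg (2*n - d), hd0]
  have hn_nonneg : 0 ≤ n := by
    by_contra hneg
    push_neg at hneg
    nlinarith only [mul_pos (neg_pos.mpr hneg) hNpos, hNum, sq_nonneg r.num]
  rcases hn_nonneg.eq_or_lt with hn0 | hnpos
  · -- q = 0
    left
    have hq0 : q = 0 := by
      rw [← Rat.num_eq_zero]
      exact hn0.symm
    have hr0 : r = 0 := by
      have : r^2 = 0 := by rw [h, hq0]; ring
      exact (pow_eq_zero_iff two_ne_zero).mp this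
    rw [hq0, hr0]
  · -- n > 0
    have hcop2 : IsCoprime n (n^2 - n*d + d^2) := by
      have h' : IsCoprime n (d^2 + n*(n - d)) := (hcnd.pow_right).add_mul_left_right (n - d)
      have hr' : n^2 - n*d + d^2 = d^2 + n*(n - d) := by ring
      rw [hr']
      exact h'
    obtain ⟨s0, hs0⟩ := Int.sq_of_isCoprime hcop2 (by rw [← hNum])
    have hns : n = s0^2 := by
      rcases hs0 with h' | h' <;> [exact h'; nlinarith only [h', hnpos, sq_nonneg s0]]
    obtain ⟨t0, ht0⟩ := Int.sq_of_isCoprime hcop2.symm (by rw [mul_comm, ← hNum])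
    have hft : n^2 - n*d + d^2 = t0^2 := by
      rcases ht0 with h' | h' <;> [exact h'; nlinarith only [h', hNpos, sq_nonneg t0]]
    have hquarteq : s0^4 - s0^2*kk^2 + kk^4 = t0^2 := by
      rw [hns, hdkk] at hft
      linear_combination hft
    have hcop_sk : IsCoprime s0 kk := by
      rw [hns, hdkk] at hcnd
      exact (hcnd.of_isCoprime_of_dvd_left (dvd_pow_self s0 two_ne_zero)).of_isCoprime_of_dvd_right
        (dvd_pow_self kk two_ne_zero)
    rcases quartic hcop_sk hquarteq with hr' | hr'
    · exfalso
      rcases mul_eq_zero.mp hr' with h0 | h0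
      · rw [h0] at hns
        simp at hns
        exact absurd hns (ne_of_gt hnpos)
      · rw [h0] at hdkk
        simp at hdkk
        exact absurd hdkk (ne_of_gt hd0)
    · -- n = d, hence q = 1
      have hnd : n = d := by rw [hns, hdkk, hr']
      have hunit : IsUnit n := by
        have : IsCoprime n n := by rw [hnd] at hcnd ⊢; exact hcnd
        exact this.isUnit_of_dvd' dvd_rfl dvd_rfl
      have hn1 : n = 1 := by
        rcases Int.isUnit_iff.mp hunit with h1 | h1
        · exact h1
        · exfalso; rw [h1] at hnpos; norm_num at hnpos
      have hd1 : d = 1 := by rw [← hnd, hn1]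
      have hq1 : q = 1 := by
        rw [e2, hn1, hd1]
        norm_num
      have hr2 : r^2 = 1 := by rw [h, hq1]; ring
      have : (r - 1)*(r + 1) = 0 := by linear_combination hr2
      rcases mul_eq_zero.mp this with h0 | h0
      · right; left
        have hr1 : r = 1 := by linarith only [h0]
        rw [hq1, hr1]
      · right; right
        have hr1 : r = -1 := by linarith only [h0]
        rw [hq1, hr1]
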